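/- arXiv:1601.05825 — 2 statements merged into one kernel-verified Lean document; each statement's English description precedes it below -/
import Mathlib

section
/- Let X be a Banach space, L ⊆ X a weakly compact set, and (x_n*) a weak*-convergent sequence in X*. Then there is a convex block subsequence of (x_n*) which converges uniformly on L. -/
open NormedSpace Filter

/-- A set is weakly compact if it is compact in the weak topology. -/
def IsWeaklyCompact {X : Type*} [NormedAddCommGroup X] [NormedSpace ℝ X] (L : Set X) : Prop :=
  IsCompact (toWeakSpace ℝ X '' L)

/-- Weak* convergence of a sequence of functionals. -/
def WStarTendsto {X : Type*} [NormedAddCommGroup X] [NormedSpace ℝ X]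
    (f : ℕ → StrongDual ℝ X) (g : StrongDual ℝ X) : Prop :=
  ∀ x : X, Tendsto (fun n => f n x) atTop (nhds (g x))

/-- Convergence in the Mackey topology μ(X*,X): uniform convergence on every
weakly compact subset of X. -/
def MackeyTendsto {X : Type*} [NormedAddCommGroup X] [NormedSpace ℝ X]
    (f : ℕ → StrongDual ℝ X) (g : StrongDual ℝ X) : Prop :=
  ∀ L : Set X, IsWeaklyCompact L → ∀ ε : ℝ, 0 < ε →
    ∀ᶠ n in atTop, ∀ x ∈ L, |f n x - g x| < ε

/-- `y` is a convex block subsequence of `x`. -/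
def IsConvexBlock {E : Type*} [AddCommGroup E] [Module ℝ E] (x y : ℕ → E) : Prop :=
  ∃ (I : ℕ → Finset ℕ) (a : ℕ → ℝ),
    (∀ k, (I k).Nonempty) ∧
    (∀ k m m', m ∈ I k → m' ∈ I (k + 1) → m < m') ∧
    (∀ n, 0 ≤ a n) ∧
    (∀ k, ∑ n ∈ I k, a n = 1) ∧
    (∀ k, y k = ∑ n ∈ I k, a n • x n)

/-- Property (K): every weak*-convergent sequence in the dual admits a convex block
subsequence converging in the Mackey topology. -/
def PropertyK (X : Type*) [NormedAddCommGroup X] [NormedSpace ℝ X] : Prop :=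
  ∀ (f : ℕ → StrongDual ℝ X) (g : StrongDual ℝ X), WStarTendsto f g →
    ∃ (y : ℕ → StrongDual ℝ X) (h : StrongDual ℝ X), IsConvexBlock f y ∧ MackeyTendsto y h


section Aux
variable {X : Type*} [NormedAddCommGroup X] [NormedSpace ℝ X] {L : Set X}

lemma isCompact_image_eval (hL : IsCompact (toWeakSpace ℝ X '' L)) (h : StrongDual ℝ X) :
    IsCompact ((fun p : X => h p) '' L) := by
  have hc : Continuous fun w : WeakSpace ℝ X => h ((toWeakSpace ℝ X).symm w) :=
    WeakBilin.eval_continuous ((topDualPairing ℝ X).flip) h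
  have h2 := hL.image hc
  rwa [Set.image_image] at h2

noncomputable def slSup (L : Set X) (h : StrongDual ℝ X) : ℝ := sSup ((fun p : X => h p) '' L)

lemma le_slSup (hL : IsCompact (toWeakSpace ℝ X '' L)) (h : StrongDual ℝ X) {p : X} (hp : p ∈ L) :
    h p ≤ slSup L h :=
  le_csSup (isCompact_image_eval hL h).bddAbove ⟨p, hp, rfl⟩

lemma slSup_le (hne : L.Nonempty) {h : StrongDual ℝ X} {c : ℝ} (hc : ∀ p ∈ L, h p ≤ c) :
    slSup L h ≤ c :=
  csSup_le (hne.image _) (by rintro y ⟨p, hp, rfl⟩; exact hc p hp)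

lemma exists_slSup_attained (hL : IsCompact (toWeakSpace ℝ X '' L)) (hne : L.Nonempty)
    (h : StrongDual ℝ X) : ∃ b ∈ L, slSup L h = h b := by
  have := (isCompact_image_eval hL h).sSup_mem (hne.image _)
  obtain ⟨b, hb, hbe⟩ := this
  exact ⟨b, hb, hbe.symm⟩

lemma exists_bound_of_weaklyCompact (hL : IsCompact (toWeakSpace ℝ X '' L)) :
    ∃ R : ℝ, 0 ≤ R ∧ ∀ p ∈ L, ‖p‖ ≤ R := by
  have hpt : ∀ x' : StrongDual ℝ X, ∃ C, ∀ p : L, ‖(inclusionInDoubleDual ℝ X (p : X)) x'‖ ≤ C := by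
    intro x'
    obtain ⟨C, hC⟩ := isBounded_iff_forall_norm_le.mp (isCompact_image_eval hL x').isBounded
    exact ⟨C, fun p => hC _ ⟨p, p.2, rfl⟩⟩
  obtain ⟨C', hC'⟩ := banach_steinhaus hpt
  refine ⟨max C' 0, le_max_right _ _, fun p hp => ?_⟩
  have : ‖inclusionInDoubleDual ℝ X p‖ = ‖p‖ :=
    (inclusionInDoubleDualLi ℝ (E := X)).norm_map p
  calc ‖p‖ = ‖inclusionInDoubleDual ℝ X p‖ := this.symm
    _ ≤ C' := hC' ⟨p, hp⟩
    _ ≤ max C' 0 := le_max_left _ _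

lemma geom_half_sum : ∀ m : ℕ, ∑ j ∈ Finset.range m, ((2:ℝ)⁻¹)^(j+1) = 1 - (2⁻¹)^m := by
  intro m; induction m with
  | zero => simp
  | succ n ih => rw [Finset.sum_range_succ, ih]; ring

lemma summable_half_smul {u : ℕ → StrongDual ℝ X} {M : ℝ} (hn : ∀ k, ‖u k‖ ≤ M) :
    Summable (fun k => ((2:ℝ)⁻¹)^(k+1) • u k) := by
  apply Summable.of_norm_bounded (g := fun k => (2⁻¹:ℝ)^(k+1) * M)
  · have : Summable (fun k : ℕ => (2⁻¹:ℝ)^(k+1)) := by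
      apply (summable_geometric_of_lt_one (by norm_num) (by norm_num)).comp_injective
        (add_left_injective 1)
    exact this.mul_right M
  · intro k; rw [norm_smul]
    simp only [norm_pow, norm_inv, Real.norm_ofNat]
    exact mul_le_mul_of_nonneg_left (hn k) (by positivity)

lemma tsum_half_mem_of_closed {s : Set (StrongDual ℝ X)} (hconv : Convex ℝ s) (hclosed : IsClosed s)
    {M : ℝ} {v : ℕ → StrongDual ℝ X} (hv : ∀ j, v j ∈ s) (hM : ∀ j, ‖v j‖ ≤ M) :
    ∑' j, ((2:ℝ)⁻¹)^(j+1) • v j ∈ s := by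
  have hsum := summable_half_smul (X := X) hM
  set w := ∑' j, ((2:ℝ)⁻¹)^(j+1) • v j with hw
  -- partial "padded" sums
  have hmem : ∀ m : ℕ, (∑ j ∈ Finset.range m, ((2:ℝ)⁻¹)^(j+1) • v j) + ((2:ℝ)⁻¹)^m • v m ∈ s := by
    intro m
    have := hconv.sum_mem (t := Finset.range (m+1))
      (w := fun j => if j = m then ((2:ℝ)⁻¹)^m else ((2:ℝ)⁻¹)^(j+1)) (z := v)
      (by intro i _; split <;> positivity)
      (by
        rw [Finset.sum_range_succ, if_pos rfl]
        rw [Finset.sum_congr rfl (fun j hj => if_neg (Finset.mem_range.mp hj).ne)]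
        rw [geom_half_sum]; ring)
      (fun i _ => hv i)
    have hs : ∑ j ∈ Finset.range (m+1),
        (if j = m then ((2:ℝ)⁻¹)^m else ((2:ℝ)⁻¹)^(j+1)) • v j
        = (∑ j ∈ Finset.range m, ((2:ℝ)⁻¹)^(j+1) • v j) + ((2:ℝ)⁻¹)^m • v m := by
      rw [Finset.sum_range_succ, if_pos rfl]
      congr 1
      exact Finset.sum_congr rfl (fun j hj => by rw [if_neg (Finset.mem_range.mp hj).ne])
    rwa [hs] at this
  have htend : Tendsto (fun m => (∑ j ∈ Finset.range m, ((2:ℝ)⁻¹)^(j+1) • v j)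
      + ((2:ℝ)⁻¹)^m • v m) atTop (nhds w) := by
    have h1 : Tendsto (fun m => ∑ j ∈ Finset.range m, ((2:ℝ)⁻¹)^(j+1) • v j) atTop (nhds w) :=
      hsum.hasSum.tendsto_sum_nat
    have h2 : Tendsto (fun m : ℕ => ((2:ℝ)⁻¹)^m • v m) atTop (nhds 0) := by
      apply squeeze_zero_norm (fun m => ?_)
        (a := fun m : ℕ => ((2:ℝ)⁻¹)^m * (max M 0))
      · have : Tendsto (fun m : ℕ => ((2:ℝ)⁻¹:ℝ)^m) atTop (nhds 0) := by
          apply tendsto_pow_atTop_nhds_zero_of_lt_one <;> norm_num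
        simpa using this.mul_const (max M 0)
      · rw [norm_smul]
        simp only [norm_pow, norm_inv, Real.norm_ofNat]
        exact mul_le_mul_of_nonneg_left ((hM m).trans (le_max_left _ _)) (by positivity)
    simpa using h1.add h2
  exact hclosed.mem_of_tendsto htend (Filter.Eventually.of_forall hmem)

end Aux

section Core
variable {X : Type*} [NormedAddCommGroup X] [NormedSpace ℝ X] {L : Set X}

lemma slSup_zero (hne : L.Nonempty) : slSup L (0 : StrongDual ℝ X) = 0 := by
  unfold slSup
  have : (fun p : X => (0 : StrongDual ℝ X) p) '' L = {(0:ℝ)} := by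
    simp only [ContinuousLinearMap.zero_apply]
    exact hne.image_const 0
  rw [this, csSup_singleton]

lemma eval_continuous_dual (b : X) : Continuous fun h : StrongDual ℝ X => h b := by
  have : (fun h : StrongDual ℝ X => h b) = ⇑(inclusionInDoubleDual ℝ X b) := rfl
  rw [this]
  exact (inclusionInDoubleDual ℝ X b).continuous

set_option maxHeartbeats 1600000 in
lemma core_one_sided (hL : IsCompact (toWeakSpace ℝ X '' L)) (hne : L.Nonempty)
    (f : ℕ → StrongDual ℝ X) (M : ℝ) (hM : ∀ n, ‖f n‖ ≤ M)
    (hf0 : ∀ p ∈ L, Tendsto (fun n => f n p) atTop (nhds 0))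
    (N : ℕ) {ε : ℝ} (hε : 0 < ε) :
    ∃ h ∈ closure (convexHull ℝ (f '' Set.Ici N)), ∀ p ∈ L, h p ≤ ε := by
  obtain ⟨p₀, hp₀⟩ := id hne
  set CC : ℕ → Set (StrongDual ℝ X) := fun m => closure (convexHull ℝ (f '' Set.Ici m)) with hCCdef
  have hCconv : ∀ m, Convex ℝ (CC m) := fun m => (convex_convexHull ℝ _).closure
  have hCclosed : ∀ m, IsClosed (CC m) := fun m => isClosed_closure
  have hCmono : ∀ {m m' : ℕ}, m ≤ m' → CC m' ⊆ CC m := fun {m m'} h =>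
    closure_mono (convexHull_mono (Set.image_mono (Set.Ici_subset_Ici.mpr h)))
  have hCf : ∀ m k, m ≤ k → f k ∈ CC m := fun m k hk =>
    subset_closure (subset_convexHull ℝ _ ⟨k, hk, rfl⟩)
  have hCnorm : ∀ m, ∀ h ∈ CC m, ‖h‖ ≤ max M 0 := by
    intro m h hh
    have hsub : CC m ⊆ Metric.closedBall 0 (max M 0) := by
      apply closure_minimal
      · apply convexHull_min
        · rintro _ ⟨k, _, rfl⟩
          exact mem_closedBall_zero_iff.mpr ((hM k).trans (le_max_left _ _))
        · exact convex_closedBall 0 (max M 0)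
      · exact Metric.isClosed_closedBall
    exact mem_closedBall_zero_iff.mp (hsub hh)
  set M₀ : ℝ := max M 0 with hM₀def
  have hM₀ : 0 ≤ M₀ := le_max_right _ _
  -- the infimum
  set aa : StrongDual ℝ X → ℕ → ℝ := fun h n =>
    sInf ((fun w => slSup L (h + ((2:ℝ)⁻¹)^n • w)) '' CC (N+n+1)) with haadef
  have hSetne : ∀ (h : StrongDual ℝ X) (n : ℕ),
      ((fun w => slSup L (h + ((2:ℝ)⁻¹)^n • w)) '' CC (N+n+1)).Nonempty :=
    fun h n => ⟨_, ⟨f (N+n+1), hCf _ _ le_rfl, rfl⟩⟩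
  have hBdd : ∀ (h : StrongDual ℝ X) (n : ℕ),
      BddBelow ((fun w => slSup L (h + ((2:ℝ)⁻¹)^n • w)) '' CC (N+n+1)) := by
    intro h n
    refine ⟨h p₀ - M₀ * ‖p₀‖, ?_⟩
    rintro _ ⟨w, hw, rfl⟩
    have h1 : ‖w p₀‖ ≤ M₀ * ‖p₀‖ :=
      (w.le_opNorm p₀).trans (mul_le_mul_of_nonneg_right (hCnorm _ _ hw) (norm_nonneg _))
    have h2 : (0:ℝ) < ((2:ℝ)⁻¹)^n := by positivity
    have h3 : ((2:ℝ)⁻¹:ℝ)^n ≤ 1 := by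
      apply pow_le_one₀ <;> norm_num
    have h4 : (h + ((2:ℝ)⁻¹)^n • w) p₀ ≤ slSup L (h + ((2:ℝ)⁻¹)^n • w) := le_slSup hL _ hp₀
    have h5 : (h + ((2:ℝ)⁻¹)^n • w) p₀ = h p₀ + ((2:ℝ)⁻¹)^n * (w p₀) := by
      simp [ContinuousLinearMap.add_apply, ContinuousLinearMap.smul_apply, smul_eq_mul]
    have h6 : |w p₀| ≤ M₀ * ‖p₀‖ := by rwa [Real.norm_eq_abs] at h1
    have h7 : -(M₀ * ‖p₀‖) ≤ w p₀ := neg_le_of_abs_le h6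
    nlinarith [abs_nonneg (w p₀), neg_abs_le (w p₀)]
  have epick : ∀ (h : StrongDual ℝ X) (n : ℕ), ∃ w, w ∈ CC (N+n+1) ∧
      slSup L (h + ((2:ℝ)⁻¹)^n • w) ≤ aa h n + ε * ((4:ℝ)⁻¹)^(n+1) := by
    intro h n
    have hlt : aa h n < aa h n + ε * ((4:ℝ)⁻¹)^(n+1) := by
      have : (0:ℝ) < ε * ((4:ℝ)⁻¹)^(n+1) := by positivity
      linarith
    obtain ⟨y, ⟨w, hw, rfl⟩, hy⟩ := exists_lt_of_csInf_lt (hSetne h n) hlt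
    exact ⟨w, hw, hy.le⟩
  -- the recursion
  let G : ℕ → StrongDual ℝ X × StrongDual ℝ X := fun n =>
    Nat.rec (motive := fun _ => StrongDual ℝ X × StrongDual ℝ X)
      ((0 : StrongDual ℝ X), (epick 0 0).choose)
      (fun k p => (p.1 + ((2:ℝ)⁻¹)^(k+1) • p.2,
        (epick (p.1 + ((2:ℝ)⁻¹)^(k+1) • p.2) (k+1)).choose)) n
  let H : ℕ → StrongDual ℝ X := fun n => (G n).1
  let u : ℕ → StrongDual ℝ X := fun n => (G n).2
  have hH0 : H 0 = 0 := rfl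
  have hHS : ∀ n, H (n+1) = H n + ((2:ℝ)⁻¹)^(n+1) • u n := fun n => rfl
  have hu : ∀ n, u n = (epick (H n) n).choose := by
    intro n; cases n with
    | zero => rfl
    | succ k => rfl
  have uspec : ∀ n, u n ∈ CC (N+n+1) ∧
      slSup L (H n + ((2:ℝ)⁻¹)^n • u n) ≤ aa (H n) n + ε * ((4:ℝ)⁻¹)^(n+1) := by
    intro n; rw [hu n]; exact (epick (H n) n).choose_spec
  have hnormu : ∀ k, ‖u k‖ ≤ M₀ := fun k => hCnorm _ _ (uspec k).1
  have hsum : Summable (fun k => ((2:ℝ)⁻¹)^(k+1) • u k) := summable_half_smul hnormu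
  have hHsum : ∀ n, H n = ∑ k ∈ Finset.range n, ((2:ℝ)⁻¹)^(k+1) • u k := by
    intro n; induction n with
    | zero => simp [hH0]
    | succ k ih => rw [Finset.sum_range_succ, ← ih, hHS]
  set w : StrongDual ℝ X := ∑' k, ((2:ℝ)⁻¹)^(k+1) • u k with hwdef
  set z : ℕ → StrongDual ℝ X := fun n => ∑' j, ((2:ℝ)⁻¹)^(j+1) • u (j + n) with hzdef
  have hz_mem : ∀ n, z n ∈ CC (N+n+1) := by
    intro n
    exact tsum_half_mem_of_closed (hCconv _) (hCclosed _)
      (fun j => hCmono (by omega) (uspec (j+n)).1) (fun j => hnormu _)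
  have hzid : ∀ n, w = H n + ((2:ℝ)⁻¹)^n • z n := by
    intro n
    have hs2 : Summable (fun j => ((2:ℝ)⁻¹)^(j+1) • u (j + n)) :=
      summable_half_smul (fun j => hnormu _)
    have h2 : ∑' j, ((2:ℝ)⁻¹)^((j+n)+1) • u (j+n) = ((2:ℝ)⁻¹)^n • z n := by
      rw [hzdef]
      rw [← hs2.tsum_const_smul (((2:ℝ)⁻¹)^n)]
      apply tsum_congr; intro j
      rw [smul_smul, ← pow_add]
      congr 2
      omega
    rw [hwdef, ← hsum.sum_add_tsum_nat_add n, ← hHsum n, h2]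
  set σ : ℝ := slSup L w with hσdef
  have haσ : ∀ n, aa (H n) n ≤ σ := by
    intro n
    apply csInf_le (hBdd _ _)
    refine ⟨z n, hz_mem n, ?_⟩
    show slSup L (H n + ((2:ℝ)⁻¹)^n • z n) = σ
    rw [← hzid n]
  have hkey : ∀ n, slSup L (H n) ≤
      (1 - ((2:ℝ)⁻¹)^n) * σ + ε * ((2:ℝ)⁻¹)^n * (1 - ((2:ℝ)⁻¹)^n) := by
    intro n; induction n with
    | zero => rw [hH0, slSup_zero hne]; norm_num
    | succ n ih =>
      apply slSup_le hne
      intro p hp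
      have hq : (0:ℝ) < ((2:ℝ)⁻¹)^n := by positivity
      have hq1 : ((2:ℝ)⁻¹:ℝ)^n ≤ 1 := by apply pow_le_one₀ <;> norm_num
      have hdecomp : H (n+1) p = (2⁻¹:ℝ) * (H n p)
          + (2⁻¹:ℝ) * ((H n + ((2:ℝ)⁻¹)^n • u n) p) := by
        rw [hHS n]
        simp only [ContinuousLinearMap.add_apply, ContinuousLinearMap.smul_apply, smul_eq_mul]
        ring
      have h1 : H n p ≤ slSup L (H n) := le_slSup hL _ hp
      have h2 : (H n + ((2:ℝ)⁻¹)^n • u n) p ≤ aa (H n) n + ε * ((4:ℝ)⁻¹)^(n+1) :=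
        (le_slSup hL _ hp).trans (uspec n).2
      have h3 := haσ n
      have h4 : ((4:ℝ)⁻¹)^(n+1) = (((2:ℝ)⁻¹)^(n+1)) * (((2:ℝ)⁻¹)^(n+1)) := by
        rw [show ((4:ℝ)⁻¹) = (2⁻¹:ℝ)*(2⁻¹:ℝ) by norm_num, mul_pow]
      have h5 : ((2:ℝ)⁻¹:ℝ)^(n+1) = ((2:ℝ)⁻¹)^n * (2⁻¹:ℝ) := pow_succ _ _
      rw [hdecomp, h5]
      rw [h4, h5] at h2
      nlinarith [mul_nonneg hε.le (mul_nonneg hq.le hq.le), sq_nonneg (((2:ℝ)⁻¹)^n),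
        mul_nonneg hε.le hq.le]
  obtain ⟨b, hb, hbe⟩ := exists_slSup_attained hL hne w
  have hzb : ∀ n, σ - ε ≤ z n b := by
    intro n
    have hq : (0:ℝ) < ((2:ℝ)⁻¹)^n := by positivity
    have hq1 : ((2:ℝ)⁻¹:ℝ)^n ≤ 1 := by apply pow_le_one₀ <;> norm_num
    have h1 : H n b ≤ slSup L (H n) := le_slSup hL _ hb
    have h2 := hkey n
    have h3 : w b = H n b + ((2:ℝ)⁻¹)^n * (z n b) := by
      rw [hzid n]
      simp [ContinuousLinearMap.add_apply, ContinuousLinearMap.smul_apply, smul_eq_mul]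
    have h4 : σ = w b := hbe
    have h5 : ((2:ℝ)⁻¹:ℝ)^n * (σ - ε) ≤ ((2:ℝ)⁻¹)^n * (z n b) := by
      nlinarith [mul_nonneg hε.le (mul_nonneg hq.le hq.le)]
    exact le_of_mul_le_mul_left h5 hq
  -- tail sup bound
  have hQbdd : ∀ n : ℕ, BddAbove ((fun k => f k b) '' Set.Ici (N+n+1)) := by
    intro n
    refine ⟨M₀ * ‖b‖, ?_⟩
    rintro _ ⟨k, _, rfl⟩
    calc f k b ≤ ‖f k b‖ := le_abs_self _
      _ ≤ ‖f k‖ * ‖b‖ := (f k).le_opNorm b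
      _ ≤ M₀ * ‖b‖ := mul_le_mul_of_nonneg_right ((hM k).trans (le_max_left _ _)) (norm_nonneg _)
  have hzQ : ∀ n, z n b ≤ sSup ((fun k => f k b) '' Set.Ici (N+n+1)) := by
    intro n
    have hhalf : CC (N+n+1) ⊆ {h : StrongDual ℝ X | h b ≤ sSup ((fun k => f k b) '' Set.Ici (N+n+1))} := by
      apply closure_minimal
      · apply convexHull_min
        · rintro _ ⟨k, hk, rfl⟩
          exact le_csSup (hQbdd n) ⟨k, hk, rfl⟩
        · exact convex_halfSpace_le ⟨fun _ _ => rfl, fun _ _ => rfl⟩ _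
      · exact isClosed_le (eval_continuous_dual b) continuous_const
    exact hhalf (hz_mem n)
  have hσε : σ ≤ ε := by
    apply le_of_forall_pos_le_add
    intro δ hδ
    obtain ⟨K, hK⟩ := Metric.tendsto_atTop.mp (hf0 b hb) δ hδ
    have hQ : sSup ((fun k => f k b) '' Set.Ici (N+K+1)) ≤ δ := by
      apply csSup_le ((Set.nonempty_Ici).image _)
      rintro _ ⟨k, hk, rfl⟩
      have hk' : N+K+1 ≤ k := hk
      have := hK k (by omega)
      rw [Real.dist_eq, sub_zero] at this
      exact (le_abs_self _).trans this.le
    have := (hzb K).trans ((hzQ K).trans hQ)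
    linarith
  refine ⟨w, ?_, fun p hp => (le_slSup hL w hp).trans hσε⟩
  have : w = z 0 := by
    have := hzid 0
    rw [hH0] at this
    simpa using this
  rw [this]
  exact hCmono (by omega) (hz_mem 0)

end Core

section Steps
variable {X : Type*} [NormedAddCommGroup X] [NormedSpace ℝ X] {L : Set X}

lemma step_hull (hL : IsCompact (toWeakSpace ℝ X '' L)) (hne : L.Nonempty)
    (f : ℕ → StrongDual ℝ X) (M : ℝ) (hM : ∀ n, ‖f n‖ ≤ M)
    (hf0 : ∀ p ∈ L, Tendsto (fun n => f n p) atTop (nhds 0))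
    (R : ℝ) (hR : ∀ p ∈ L, ‖p‖ ≤ R) (hR0 : 0 ≤ R)
    (N : ℕ) {ε : ℝ} (hε : 0 < ε) :
    ∃ h ∈ convexHull ℝ (f '' Set.Ici N), ∀ p ∈ L, h p ≤ ε := by
  obtain ⟨h₀, hc, hb⟩ := core_one_sided hL hne f M hM hf0 N (half_pos hε)
  rw [Metric.mem_closure_iff] at hc
  obtain ⟨h, hmem, hdist⟩ := hc (ε/(2*(R+1))) (by positivity)
  refine ⟨h, hmem, fun p hp => ?_⟩
  have e1 : ‖h - h₀‖ ≤ ε/(2*(R+1)) := by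
    rw [dist_eq_norm, norm_sub_rev] at hdist; exact hdist.le
  have h1 : |(h - h₀) p| ≤ ‖h - h₀‖ * ‖p‖ := by
    rw [← Real.norm_eq_abs]; exact (h - h₀).le_opNorm p
  have e3 : |(h - h₀) p| ≤ ε/(2*(R+1)) * R :=
    h1.trans (mul_le_mul e1 (hR p hp) (norm_nonneg _) (by positivity))
  have hd0 : (0:ℝ) ≤ ε/(2*(R+1)) := by positivity
  have hdm : ε/(2*(R+1)) * (2*(R+1)) = ε := div_mul_cancel₀ _ (by positivity)
  have e4 : ε/(2*(R+1)) * R ≤ ε/2 := by nlinarith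
  have e5 : h p = h₀ p + (h - h₀) p := by
    simp [ContinuousLinearMap.sub_apply]
  have e6 : (h - h₀) p ≤ ε/2 := (le_abs_self _).trans (e3.trans e4)
  have e7 : h₀ p ≤ ε/2 := hb p hp
  linarith

lemma rep_of_mem_hull {E : Type*} [AddCommGroup E] [Module ℝ E] (f : ℕ → E) (N : ℕ) {h : E}
    (hh : h ∈ convexHull ℝ (f '' Set.Ici N)) :
    ∃ (t : Finset ℕ) (c : ℕ → ℝ), t.Nonempty ∧ (∀ n ∈ t, N ≤ n) ∧ (∀ n, 0 ≤ c n) ∧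
      (∀ n ∉ t, c n = 0) ∧ (∑ n ∈ t, c n = 1) ∧ h = ∑ n ∈ t, c n • f n := by
  classical
  rw [convexHull_eq] at hh
  obtain ⟨ι, t, wt, zt, hw0, hw1, hz, hcm⟩ := hh
  have hch : ∀ i : ι, i ∈ t → ∃ k, N ≤ k ∧ f k = zt i := by
    intro i hi; obtain ⟨k, hk, he⟩ := hz i hi; exact ⟨k, hk, he⟩
  set κ : ι → ℕ := fun i => if hi : ∃ k, N ≤ k ∧ f k = zt i then hi.choose else 0 with hκ
  have hκspec : ∀ i ∈ t, N ≤ κ i ∧ f (κ i) = zt i := by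
    intro i hi
    have hex := hch i hi
    rw [hκ]; dsimp only; rw [dif_pos hex]; exact hex.choose_spec
  have htne : t.Nonempty := Finset.nonempty_of_sum_ne_zero (by rw [hw1]; norm_num)
  refine ⟨t.image κ, fun n => ∑ i ∈ t.filter (fun i => κ i = n), wt i,
    htne.image κ, ?_, ?_, ?_, ?_, ?_⟩
  · rintro n hn; obtain ⟨i, hi, rfl⟩ := Finset.mem_image.mp hn; exact (hκspec i hi).1
  · intro n; exact Finset.sum_nonneg (fun i hi => hw0 i (Finset.mem_of_mem_filter i hi))
  · intro n hn
    have : t.filter (fun i => κ i = n) = ∅ := by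
      rw [Finset.filter_eq_empty_iff]
      intro i hi hk
      exact hn (Finset.mem_image.mpr ⟨i, hi, hk⟩)
    dsimp only
    rw [this, Finset.sum_empty]
  · rw [Finset.sum_fiberwise_of_maps_to (fun i hi => Finset.mem_image_of_mem κ hi) wt]
    exact hw1
  · have h1 : t.centerMass wt zt = ∑ i ∈ t, wt i • zt i :=
      Finset.centerMass_eq_of_sum_1 _ _ hw1
    rw [← hcm, h1,
      ← Finset.sum_fiberwise_of_maps_to (fun i hi => Finset.mem_image_of_mem κ hi)
        (fun i => wt i • zt i)]
    apply Finset.sum_congr rfl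
    intro n hn
    rw [Finset.sum_smul]
    apply Finset.sum_congr rfl
    intro i hi
    obtain ⟨hit, hin⟩ := Finset.mem_filter.mp hi
    rw [← (hκspec i hit).2, hin]

lemma blockstep (hL : IsCompact (toWeakSpace ℝ X '' L)) (hne : L.Nonempty)
    (f : ℕ → StrongDual ℝ X) (M : ℝ) (hM : ∀ n, ‖f n‖ ≤ M)
    (hf0 : ∀ p ∈ L, Tendsto (fun n => f n p) atTop (nhds 0))
    (R : ℝ) (hR : ∀ p ∈ L, ‖p‖ ≤ R) (hR0 : 0 ≤ R)
    (N : ℕ) {ε : ℝ} (hε : 0 < ε) :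
    ∃ (t : Finset ℕ) (c : ℕ → ℝ), t.Nonempty ∧ (∀ n ∈ t, N ≤ n) ∧ (∀ n, 0 ≤ c n) ∧
      (∀ n ∉ t, c n = 0) ∧ (∑ n ∈ t, c n = 1) ∧
      ∀ p ∈ L, |(∑ n ∈ t, c n • f n) p| ≤ ε := by
  classical
  have E1 : ∀ N' : ℕ, ∃ m : ℕ, N' < m ∧ ∃ (t : Finset ℕ) (c : ℕ → ℝ), t.Nonempty ∧
      (∀ n ∈ t, N' ≤ n ∧ n < m) ∧ (∀ n, 0 ≤ c n) ∧ (∀ n ∉ t, c n = 0) ∧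
      (∑ n ∈ t, c n = 1) ∧ ∀ p ∈ L, (∑ n ∈ t, c n • f n) p ≤ ε := by
    intro N'
    obtain ⟨h, hmem, hbound⟩ := step_hull hL hne f M hM hf0 R hR hR0 N' hε
    obtain ⟨t, c, htne, htN, hc0, hcsupp, hcsum, hrep⟩ := rep_of_mem_hull f N' hmem
    refine ⟨max (t.max' htne + 1) (N'+1), by omega, t, c, htne, ?_, hc0, hcsupp, hcsum, ?_⟩
    · intro n hn
      refine ⟨htN n hn, ?_⟩
      have := Finset.le_max' t n hn; omega
    · intro p hp; rw [← hrep]; exact hbound p hp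
  let Ns : ℕ → ℕ := fun j => Nat.rec N (fun _ prev => (E1 prev).choose) j
  have hNs0 : Ns 0 = N := rfl
  have hNsS : ∀ j, Ns (j+1) = (E1 (Ns j)).choose := fun j => rfl
  have hNslt : ∀ j, Ns j < Ns (j+1) := fun j => by rw [hNsS j]; exact (E1 (Ns j)).choose_spec.1
  have hNsge : ∀ j, N + j ≤ Ns j := by
    intro j; induction j with
    | zero => simp [hNs0]
    | succ k ih => have := hNslt k; omega
  have spec : ∀ j, ∃ (t : Finset ℕ) (c : ℕ → ℝ), t.Nonempty ∧
      (∀ n ∈ t, Ns j ≤ n ∧ n < Ns (j+1)) ∧ (∀ n, 0 ≤ c n) ∧ (∀ n ∉ t, c n = 0) ∧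
      (∑ n ∈ t, c n = 1) ∧ ∀ p ∈ L, (∑ n ∈ t, c n • f n) p ≤ ε := by
    intro j; rw [hNsS j]; exact (E1 (Ns j)).choose_spec.2
  let tj : ℕ → Finset ℕ := fun j => (spec j).choose
  let cj : ℕ → ℕ → ℝ := fun j => (spec j).choose_spec.choose
  have specj : ∀ j, (tj j).Nonempty ∧
      (∀ n ∈ tj j, Ns j ≤ n ∧ n < Ns (j+1)) ∧ (∀ n, 0 ≤ cj j n) ∧ (∀ n ∉ tj j, cj j n = 0) ∧
      (∑ n ∈ tj j, cj j n = 1) ∧ ∀ p ∈ L, (∑ n ∈ tj j, cj j n • f n) p ≤ ε :=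
    fun j => (spec j).choose_spec.choose_spec
  set gj : ℕ → StrongDual ℝ X := fun j => ∑ n ∈ tj j, cj j n • f n with hgjdef
  set M₀ : ℝ := max M 0 with hM₀def
  have hgnorm : ∀ j, ‖gj j‖ ≤ M₀ := by
    intro j
    calc ‖gj j‖ ≤ ∑ n ∈ tj j, ‖cj j n • f n‖ := norm_sum_le _ _
      _ ≤ ∑ n ∈ tj j, cj j n * M₀ := by
          apply Finset.sum_le_sum
          intro n hn
          rw [norm_smul, Real.norm_eq_abs, abs_of_nonneg ((specj j).2.2.1 n)]
          exact mul_le_mul_of_nonneg_left ((hM n).trans (le_max_left _ _)) ((specj j).2.2.1 n)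
      _ = M₀ := by rw [← Finset.sum_mul, (specj j).2.2.2.2.1, one_mul]
  have hg0 : ∀ p ∈ L, Tendsto (fun j => gj j p) atTop (nhds 0) := by
    intro p hp
    rw [Metric.tendsto_atTop]
    intro δ hδ
    obtain ⟨K, hK⟩ := Metric.tendsto_atTop.mp (hf0 p hp) (δ/2) (by positivity)
    refine ⟨K, fun j hj => ?_⟩
    rw [Real.dist_eq, sub_zero]
    have hgp : gj j p = ∑ n ∈ tj j, cj j n * f n p := by
      rw [hgjdef]
      simp [ContinuousLinearMap.sum_apply, ContinuousLinearMap.smul_apply, smul_eq_mul]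
    have habs : |gj j p| ≤ ∑ n ∈ tj j, cj j n * (δ/2) := by
      rw [hgp]
      refine (Finset.abs_sum_le_sum_abs _ _).trans (Finset.sum_le_sum ?_)
      intro n hn
      rw [abs_mul, abs_of_nonneg ((specj j).2.2.1 n)]
      apply mul_le_mul_of_nonneg_left _ ((specj j).2.2.1 n)
      have hnK : K ≤ n := by
        have h1 := ((specj j).2.1 n hn).1
        have h2 := hNsge j
        omega
      have := hK n hnK
      rw [Real.dist_eq, sub_zero] at this
      exact this.le
    rw [← Finset.sum_mul, (specj j).2.2.2.2.1, one_mul] at habs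
    calc |gj j p| ≤ δ/2 := habs
      _ < δ := by linarith
  have hgmem : ∀ j, gj j ∈ convexHull ℝ (f '' Set.Ici N) := by
    intro j
    apply (convex_convexHull ℝ _).sum_mem (fun n _ => (specj j).2.2.1 n) (specj j).2.2.2.2.1
    intro n hn
    apply subset_convexHull
    exact ⟨n, by have := ((specj j).2.1 n hn).1; have := hNsge j; simp; omega, rfl⟩
  -- stage 2
  obtain ⟨h', hmem', hb'⟩ := step_hull hL hne (fun j => -(gj j)) M₀
    (fun j => by rw [norm_neg]; exact hgnorm j)
    (fun p hp => by simpa using (hg0 p hp).neg) R hR hR0 0 hε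
  obtain ⟨t', c', ht'ne, _, hc'0, hc'supp, hc'sum, hrep'⟩ := rep_of_mem_hull _ 0 hmem'
  have hu : h' = -(∑ j ∈ t', c' j • gj j) := by
    rw [hrep', ← Finset.sum_neg_distrib]
    apply Finset.sum_congr rfl
    intro j _
    rw [smul_neg]
  set u : StrongDual ℝ X := ∑ j ∈ t', c' j • gj j with hudef
  refine ⟨t'.biUnion tj, fun n => ∑ j ∈ t', c' j * cj j n, ?_, ?_, ?_, ?_, ?_, ?_⟩
  · obtain ⟨j, hj⟩ := ht'ne
    obtain ⟨n, hn⟩ := (specj j).1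
    exact ⟨n, Finset.mem_biUnion.mpr ⟨j, hj, hn⟩⟩
  · intro n hn
    obtain ⟨j, _, hnj⟩ := Finset.mem_biUnion.mp hn
    have := ((specj j).2.1 n hnj).1
    have := hNsge j
    omega
  · intro n
    exact Finset.sum_nonneg (fun j _ => mul_nonneg (hc'0 j) ((specj j).2.2.1 n))
  · intro n hn
    apply Finset.sum_eq_zero
    intro j hj
    have : n ∉ tj j := fun hc => hn (Finset.mem_biUnion.mpr ⟨j, hj, hc⟩)
    rw [(specj j).2.2.2.1 n this, mul_zero]
  · dsimp only
    rw [Finset.sum_comm]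
    rw [show (1:ℝ) = ∑ j ∈ t', c' j from hc'sum.symm]
    apply Finset.sum_congr rfl
    intro j hj
    rw [← Finset.mul_sum]
    rw [← Finset.sum_subset (Finset.subset_biUnion_of_mem tj hj)
      (fun n _ hn => (specj j).2.2.2.1 n hn)]
    rw [(specj j).2.2.2.2.1, mul_one]
  · have hflat : ∑ n ∈ t'.biUnion tj, (∑ j ∈ t', c' j * cj j n) • f n = u := by
      rw [hudef]
      have h1 : ∀ n ∈ t'.biUnion tj, (∑ j ∈ t', c' j * cj j n) • f n
          = ∑ j ∈ t', c' j • (cj j n • f n) := by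
        intro n _
        rw [Finset.sum_smul]
        apply Finset.sum_congr rfl
        intro j _
        rw [mul_smul]
      rw [Finset.sum_congr rfl h1, Finset.sum_comm]
      apply Finset.sum_congr rfl
      intro j hj
      rw [← Finset.smul_sum]
      congr 1
      rw [← Finset.sum_subset (Finset.subset_biUnion_of_mem tj hj)
        (fun n _ hn => by rw [(specj j).2.2.2.1 n hn, zero_smul])]
    intro p hp
    dsimp only
    rw [hflat]
    have hup : u p = ∑ j ∈ t', c' j * gj j p := by
      rw [hudef]
      simp [ContinuousLinearMap.sum_apply, ContinuousLinearMap.smul_apply, smul_eq_mul]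
    have hupper : u p ≤ ε := by
      rw [hup]
      calc ∑ j ∈ t', c' j * gj j p ≤ ∑ j ∈ t', c' j * ε := by
            apply Finset.sum_le_sum
            intro j _
            exact mul_le_mul_of_nonneg_left ((specj j).2.2.2.2.2 p hp) (hc'0 j)
        _ = ε := by rw [← Finset.sum_mul, hc'sum, one_mul]
    have hlower : -ε ≤ u p := by
      have h2 : h' p = -(u p) := by rw [hu]; simp
      have h3 := hb' p hp
      rw [h2] at h3
      linarith
    exact abs_le.mpr ⟨hlower, hupper⟩

end Steps

theorem convex_block_uniform_on_weakly_compact' (X : Type*) [NormedAddCommGroup X]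
    [NormedSpace ℝ X] [CompleteSpace X] (L : Set X)
    (hL : IsCompact (toWeakSpace ℝ X '' L))
    (x : ℕ → StrongDual ℝ X) (g : StrongDual ℝ X)
    (hx : ∀ p : X, Tendsto (fun n => x n p) atTop (nhds (g p))) :
    ∃ y : ℕ → StrongDual ℝ X,
      (∃ (I : ℕ → Finset ℕ) (a : ℕ → ℝ),
        (∀ k, (I k).Nonempty) ∧
        (∀ k m m', m ∈ I k → m' ∈ I (k + 1) → m < m') ∧
        (∀ n, 0 ≤ a n) ∧
        (∀ k, ∑ n ∈ I k, a n = 1) ∧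
        (∀ k, y k = ∑ n ∈ I k, a n • x n)) ∧
      TendstoUniformlyOn (fun k p => y k p) (fun p => g p) atTop L := by
  classical
  by_cases hLne : L.Nonempty
  swap
  · refine ⟨x, ⟨fun k => {k}, fun _ => 1, fun k => Finset.singleton_nonempty k, ?_, ?_, ?_, ?_⟩, ?_⟩
    · intro k m m' hm hm'
      rw [Finset.mem_singleton] at hm hm'
      omega
    · intro n; norm_num
    · intro k; simp
    · intro k; simp
    · rw [Set.not_nonempty_iff_eq_empty.mp hLne]
      exact tendstoUniformlyOn_empty
  set f : ℕ → StrongDual ℝ X := fun n => x n - g with hfdef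
  have hf0 : ∀ p ∈ L, Tendsto (fun n => f n p) atTop (nhds 0) := by
    intro p _
    have h1 := (hx p).sub_const (g p)
    rw [sub_self] at h1
    exact h1
  have hxb : ∀ p : X, ∃ C, ∀ n, ‖x n p‖ ≤ C := by
    intro p
    obtain ⟨C, hC⟩ := (hx p).norm.bddAbove_range
    exact ⟨C, fun n => hC ⟨n, rfl⟩⟩
  obtain ⟨C', hC'⟩ := banach_steinhaus hxb
  have hfM : ∀ n, ‖f n‖ ≤ C' + ‖g‖ := by
    intro n
    calc ‖f n‖ = ‖x n - g‖ := rfl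
      _ ≤ ‖x n‖ + ‖g‖ := norm_sub_le _ _
      _ ≤ C' + ‖g‖ := by have := hC' n; linarith
  obtain ⟨R, hR0, hR⟩ := exists_bound_of_weaklyCompact hL
  have E2 : ∀ k N' : ℕ, ∃ m : ℕ, ∃ (t : Finset ℕ) (c : ℕ → ℝ), t.Nonempty ∧
      (∀ n ∈ t, (N' ≤ n ∧ k ≤ n) ∧ n < m) ∧ (∀ n, 0 ≤ c n) ∧ (∀ n ∉ t, c n = 0) ∧
      (∑ n ∈ t, c n = 1) ∧ ∀ p ∈ L, |(∑ n ∈ t, c n • f n) p| ≤ 1/(k+1) := by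
    intro k N'
    obtain ⟨t, c, h1, h2, h3, h4, h5, h6⟩ := blockstep hL hLne f (C' + ‖g‖) hfM hf0 R hR hR0
      (max N' k) (ε := 1/(k+1)) (by positivity)
    refine ⟨t.max' h1 + 1, t, c, h1, ?_, h3, h4, h5, h6⟩
    intro n hn
    have hge := h2 n hn
    have hle := Finset.le_max' t n hn
    omega
  let B : ℕ → ℕ := fun k => Nat.rec 0 (fun k prev => (E2 k prev).choose) k
  have hBS : ∀ k, B (k+1) = (E2 k (B k)).choose := fun k => rfl
  let Ik : ℕ → Finset ℕ := fun k => (E2 k (B k)).choose_spec.choose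
  let ck : ℕ → ℕ → ℝ := fun k => (E2 k (B k)).choose_spec.choose_spec.choose
  have speck : ∀ k, (Ik k).Nonempty ∧
      (∀ n ∈ Ik k, (B k ≤ n ∧ k ≤ n) ∧ n < B (k+1)) ∧ (∀ n, 0 ≤ ck k n) ∧
      (∀ n ∉ Ik k, ck k n = 0) ∧ (∑ n ∈ Ik k, ck k n = 1) ∧
      ∀ p ∈ L, |(∑ n ∈ Ik k, ck k n • f n) p| ≤ 1/(k+1) :=
    fun k => (E2 k (B k)).choose_spec.choose_spec.choose_spec
  have hBmono : Monotone B := by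
    apply monotone_nat_of_le_succ
    intro k
    obtain ⟨n, hn⟩ := (speck k).1
    have := (speck k).2.1 n hn
    omega
  have hdisj : ∀ k k' n, k < k' → n ∈ Ik k → n ∉ Ik k' := by
    intro k k' n hkk hn hn'
    have h1 := (speck k).2.1 n hn
    have h2 := (speck k').2.1 n hn'
    have h3 := hBmono (show k+1 ≤ k' by omega)
    omega
  set a : ℕ → ℝ := fun n => ∑ k ∈ Finset.range (n+1), if n ∈ Ik k then ck k n else 0 with hadef
  have ha : ∀ k n, n ∈ Ik k → a n = ck k n := by
    intro k n hn
    have hkn : k ≤ n := ((speck k).2.1 n hn).1.2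
    rw [hadef]
    dsimp only
    rw [Finset.sum_eq_single_of_mem k (Finset.mem_range.mpr (by omega))]
    · rw [if_pos hn]
    · intro k' _ hne
      rw [if_neg]
      intro hc
      rcases lt_or_gt_of_ne hne with h | h
      · exact hdisj k' k n h hc hn
      · exact hdisj k k' n h hn hc
  have ha0 : ∀ n, 0 ≤ a n := by
    intro n
    apply Finset.sum_nonneg
    intro k _
    split
    · exact (speck k).2.2.1 n
    · exact le_rfl
  refine ⟨fun k => ∑ n ∈ Ik k, a n • x n, ⟨Ik, a, fun k => (speck k).1, ?_, ha0, ?_, fun k => rfl⟩, ?_⟩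
  · intro k m m' hm hm'
    have h1 := ((speck k).2.1 m hm).2
    have h2 := ((speck (k+1)).2.1 m' hm').1.1
    omega
  · intro k
    rw [Finset.sum_congr rfl (fun n hn => ha k n hn)]
    exact (speck k).2.2.2.2.1
  · have hyg : ∀ k, (∑ n ∈ Ik k, a n • x n) = (∑ n ∈ Ik k, ck k n • f n) + g := by
      intro k
      rw [Finset.sum_congr rfl (fun n hn => by rw [ha k n hn])]
      have hxf : ∀ n, x n = f n + g := by
        intro n; rw [hfdef]; dsimp only; rw [sub_add_cancel]
      calc ∑ n ∈ Ik k, ck k n • x n = ∑ n ∈ Ik k, (ck k n • f n + ck k n • g) := by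
            apply Finset.sum_congr rfl
            intro n _
            rw [hxf n, smul_add]
        _ = (∑ n ∈ Ik k, ck k n • f n) + (∑ n ∈ Ik k, ck k n) • g := by
            rw [Finset.sum_add_distrib, Finset.sum_smul]
        _ = (∑ n ∈ Ik k, ck k n • f n) + g := by
            rw [(speck k).2.2.2.2.1, one_smul]
    rw [Metric.tendstoUniformlyOn_iff]
    intro δ hδ
    obtain ⟨K, hK⟩ := exists_nat_one_div_lt (K := ℝ) hδ
    rw [eventually_atTop]
    refine ⟨K, fun k hk p hp => ?_⟩
    have h1 : dist (g p) ((∑ n ∈ Ik k, a n • x n) p) = |(∑ n ∈ Ik k, ck k n • f n) p| := by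
      rw [Real.dist_eq, hyg k, ContinuousLinearMap.add_apply, abs_sub_comm]
      congr 1
      ring
    rw [h1]
    have h2 := (speck k).2.2.2.2.2 p hp
    have h3 : 1/((k:ℝ)+1) ≤ 1/((K:ℝ)+1) := by
      apply one_div_le_one_div_of_le
      · positivity
      · exact_mod_cast Nat.succ_le_succ hk
    linarith

theorem convex_block_uniform_on_weakly_compact (X : Type*) [NormedAddCommGroup X]
    [NormedSpace ℝ X] [CompleteSpace X] (L : Set X) (hL : IsWeaklyCompact L)
    (x : ℕ → StrongDual ℝ X) (g : StrongDual ℝ X) (hx : WStarTendsto x g) :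
    ∃ y : ℕ → StrongDual ℝ X, IsConvexBlock x y ∧
      TendstoUniformlyOn (fun k p => y k p) (fun p => g p) atTop L := by
  obtain ⟨y, hblock, hunif⟩ := convex_block_uniform_on_weakly_compact' X L hL x g hx
  exact ⟨y, hblock, hunif⟩
end

section
/- Let X be a Banach space strongly generated by a family 𝒢 of weakly compact subsets. Then a bounded sequence (x_n*) in X* converges to 0 in the Mackey topology μ(X*,X) if and only if it converges to 0 uniformly on every element of 𝒢. -/
open NormedSpace Filter

/-- A family of sets strongly generates X if every weakly compact set is contained in
G + εB_X for some member G of the family. -/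
def StronglyGenerates {X : Type*} [NormedAddCommGroup X] [NormedSpace ℝ X]
    (𝒢 : Set (Set X)) : Prop :=
  ∀ L : Set X, IsWeaklyCompact L → ∀ ε : ℝ, 0 < ε →
    ∃ G ∈ 𝒢, ∀ x ∈ L, ∃ g ∈ G, ‖x - g‖ ≤ ε

theorem mackeyNull_iff_uniform_on_generating_family (X : Type*) [NormedAddCommGroup X]
    [NormedSpace ℝ X] [CompleteSpace X] (𝒢 : Set (Set X))
    (h𝒢 : ∀ G ∈ 𝒢, IsWeaklyCompact G) (hgen : StronglyGenerates 𝒢)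
    (x : ℕ → StrongDual ℝ X) (C : ℝ) (hb : ∀ n, ‖x n‖ ≤ C) :
    MackeyTendsto x 0 ↔
      ∀ G ∈ 𝒢, TendstoUniformlyOn (fun n p => x n p) (fun _ => 0) atTop G := by

  have hC : 0 ≤ C := le_trans (norm_nonneg _) (hb 0)
  constructor
  · intro hM G hG
    rw [Metric.tendstoUniformlyOn_iff]
    intro ε hε
    filter_upwards [hM G (h𝒢 G hG) ε hε] with n hn p hp
    have := hn p hp
    simp only [ContinuousLinearMap.zero_apply, sub_zero] at this
    simpa [Real.dist_eq, abs_sub_comm] using this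
  · intro hU L hL ε hε
    obtain ⟨G, hG, hGL⟩ := hgen L hL (ε / (2 * (C + 1))) (by positivity)
    have h2 := (Metric.tendstoUniformlyOn_iff.mp (hU G hG)) (ε / 2) (by positivity)
    filter_upwards [h2] with n hn p hp
    obtain ⟨g, hg, hpg⟩ := hGL p hp
    have h1 : |x n g| < ε / 2 := by
      have := hn g hg
      rw [Real.dist_eq] at this
      simpa [abs_sub_comm] using this
    have h3 : |x n (p - g)| ≤ C * (ε / (2 * (C + 1))) := by
      calc |x n (p - g)| ≤ ‖x n‖ * ‖p - g‖ := (x n).le_opNorm _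
        _ ≤ C * (ε / (2 * (C + 1))) :=
          mul_le_mul (hb n) hpg (norm_nonneg _) hC
    have h4 : C * (ε / (2 * (C + 1))) < ε / 2 := by
      rw [mul_div_assoc', div_lt_div_iff₀ (by positivity) (by norm_num)]
      nlinarith
    have : |x n p| ≤ |x n g| + |x n (p - g)| := by
      have : x n p = x n g + x n (p - g) := by simp
      rw [this]; exact abs_add_le _ _
    simp only [ContinuousLinearMap.zero_apply, sub_zero]
    linarith
end
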